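/- arXiv:1410.2209 — 4 statements merged into one kernel-verified Lean document; each statement's English description precedes it below -/
import Mathlib

section
/- Let T₁,...,T_k be multilinear polynomials in x₁,...,x_n with non-negative coefficients, and for each i define the bivariate polynomial Q_i(x,y) = Σ_{m ∈ T_i} y^{deg(m)} x^{b(F(m))}, where F(m) is the set of variables occurring in monomial m and b(F(m)) is the integer with binary characteristic vector of F(m). Then the product T₁···T_k contains the monomial x₁x₂···x_n (with positive coefficient) if and only if Q₁···Q_k contains the monomial y^n x^{2^n − 1} (with positive coefficient). -/
open MvPolynomial Finset

lemma sum_two_pow (n : ℕ) : ∑ v ∈ Finset.range n, 2 ^ v = 2 ^ n - 1 := by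
  induction n with
  | zero => simp
  | succ m ih => rw [Finset.sum_range_succ, ih]; have := Nat.one_le_two_pow (n := m); omega

lemma binary_unique : ∀ (n : ℕ) (s : ℕ → ℕ),
    (∑ v ∈ Finset.range n, s v * 2 ^ v = 2 ^ n - 1) →
    (∑ v ∈ Finset.range n, s v ≤ n) → ∀ v < n, s v = 1 := by
  intro n
  induction n with
  | zero => intro s _ _ v hv; omega
  | succ m ih =>
    intro s hsum hcard v hv
    rcases Nat.eq_zero_or_pos m with hm | hm
    · subst hm
      interval_cases v
      simpa using hsum
    have hdouble : ∑ k ∈ Finset.range m, s (k + 1) * 2 ^ (k + 1)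
        = 2 * ∑ k ∈ Finset.range m, s (k + 1) * 2 ^ k := by
      rw [Finset.mul_sum]; exact Finset.sum_congr rfl fun x _ => by ring
    have hsplit : s 0 + 2 * ∑ v ∈ Finset.range m, s (v + 1) * 2 ^ v = 2 ^ (m + 1) - 1 := by
      rw [Finset.sum_range_succ', hdouble] at hsum
      simpa using by omega
    have hodd : s 0 % 2 = 1 := by
      have h2 : 0 < 2 ^ (m + 1) := Nat.pow_pos (by norm_num)
      omega
    set a := (s 0 - 1) / 2 with ha
    have hs0 : s 0 = 2 * a + 1 := by omega
    set t : ℕ → ℕ := fun v => s (v + 1) + (if v = 0 then a else 0) with ht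
    clear_value t a
    have hteq : ∑ v ∈ Finset.range m, t v = (∑ v ∈ Finset.range m, s (v + 1)) + a := by
      rw [ht]
      simp only [Finset.sum_add_distrib]
      congr 1
      rw [Finset.sum_ite_eq' (Finset.range m) 0 (fun _ => a)]
      simp [Finset.mem_range, hm]
    have htsum : ∑ v ∈ Finset.range m, t v * 2 ^ v = 2 ^ m - 1 := by
      have heq : ∑ v ∈ Finset.range m, t v * 2 ^ v
          = (∑ v ∈ Finset.range m, s (v + 1) * 2 ^ v) + a := by
        rw [ht]
        simp only [add_mul, Finset.sum_add_distrib]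
        congr 1
        have : ∀ x ∈ Finset.range m, (if x = 0 then a else 0) * 2 ^ x
            = (if x = 0 then a * 2 ^ x else 0) := by
          intro x _; split_ifs <;> simp
        rw [Finset.sum_congr rfl this,
          Finset.sum_ite_eq' (Finset.range m) 0 (fun x => a * 2 ^ x)]
        simp [Finset.mem_range, hm]
      rw [heq]
      have h2 : (2:ℕ) ^ (m+1) = 2 * 2 ^ m := by ring
      have h3 : 0 < 2 ^ m := Nat.pow_pos (by norm_num)
      omega
    have hscard : ∑ v ∈ Finset.range m, s (v + 1) + s 0 ≤ m + 1 := by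
      rw [Finset.sum_range_succ'] at hcard
      omega
    have htcard : ∑ v ∈ Finset.range m, t v ≤ m := by omega
    have hall : ∀ v < m, t v = 1 := ih t htsum htcard
    have hmt : ∑ v ∈ Finset.range m, t v = m := by
      rw [Finset.sum_congr rfl (fun v hv => hall v (Finset.mem_range.mp hv))]
      simp
    have hsa : (∑ v ∈ Finset.range m, s (v + 1)) + a = m := hteq.symm.trans hmt
    have ha0 : a = 0 := by omega
    rcases Nat.eq_zero_or_pos v with h | h
    · subst h; omega
    · obtain ⟨w, rfl⟩ : ∃ w, v = w + 1 := ⟨v - 1, by omega⟩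
      have h1 := hall w (by omega)
      rw [ht] at h1
      simp only [ha0, ite_self, add_zero] at h1
      exact h1

lemma coeff_prod_pos {σ ι : Type*} (s : Finset ι) (P : ι → MvPolynomial σ ℕ) (d : σ →₀ ℕ) :
    0 < (∏ i ∈ s, P i).coeff d ↔
      ∃ f : ι → (σ →₀ ℕ), (∀ i ∈ s, 0 < (P i).coeff (f i)) ∧ ∑ i ∈ s, f i = d := by
  classical
  induction s using Finset.cons_induction generalizing d with
  | empty =>
    simp only [Finset.prod_empty, Finset.sum_empty]
    constructor
    · intro h
      refine ⟨fun _ => 0, by simp, ?_⟩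
      rw [MvPolynomial.coeff_one] at h
      split_ifs at h with h0
      · exact h0
      · omega
    · rintro ⟨f, -, rfl⟩
      simp [MvPolynomial.coeff_one]
  | cons a s ha ih =>
    rw [Finset.prod_cons, MvPolynomial.coeff_mul]
    constructor
    · intro h
      have hex : ∃ x ∈ Finset.HasAntidiagonal.antidiagonal d,
          MvPolynomial.coeff x.1 (P a) * MvPolynomial.coeff x.2 (∏ i ∈ s, P i) ≠ 0 := by
        by_contra hc
        push_neg at hc
        rw [Finset.sum_eq_zero hc] at h
        omega
      obtain ⟨⟨u, w⟩, hmem, hne⟩ := hex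
      rw [Finset.HasAntidiagonal.mem_antidiagonal] at hmem
      have h1 : 0 < MvPolynomial.coeff u (P a) := Nat.pos_of_ne_zero (by intro h'; simp [h'] at hne)
      have h2 : 0 < MvPolynomial.coeff w (∏ i ∈ s, P i) :=
        Nat.pos_of_ne_zero (by intro h'; simp [h'] at hne)
      obtain ⟨f, hf, hfsum⟩ := (ih w).mp h2
      refine ⟨fun i => if i = a then u else f i, ?_, ?_⟩
      · intro i hi
        rcases Finset.mem_cons.mp hi with rfl | hi'
        · simpa using h1
        · have : i ≠ a := by rintro rfl; exact ha hi'
          simpa [this] using hf i hi'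
      · have hre : (∑ i ∈ s, if i = a then u else f i) = ∑ i ∈ s, f i :=
          Finset.sum_congr rfl fun i hi => if_neg (by rintro rfl; exact ha hi)
        rw [Finset.sum_cons, if_pos rfl, hre, hfsum]
        exact hmem
    · rintro ⟨f, hf, hfsum⟩
      rw [Finset.sum_cons] at hfsum
      have h1 : 0 < MvPolynomial.coeff (f a) (P a) := hf a (Finset.mem_cons_self a s)
      have h2 : 0 < MvPolynomial.coeff (∑ i ∈ s, f i) (∏ i ∈ s, P i) :=
        (ih _).mpr ⟨f, fun i hi => hf i (Finset.mem_cons_of_mem hi), rfl⟩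
      have hmem : (f a, ∑ i ∈ s, f i) ∈ Finset.HasAntidiagonal.antidiagonal d :=
        Finset.HasAntidiagonal.mem_antidiagonal.mpr hfsum
      calc 0 < MvPolynomial.coeff (f a) (P a) * MvPolynomial.coeff (∑ i ∈ s, f i) (∏ i ∈ s, P i) :=
            Nat.mul_pos h1 h2
        _ ≤ _ := Finset.single_le_sum (f := fun x => MvPolynomial.coeff x.1 (P a) * MvPolynomial.coeff x.2 (∏ i ∈ s, P i)) (fun _ _ => Nat.zero_le _) hmem

lemma supp_pow_eq (n : ℕ) (d : Fin n →₀ ℕ) (h : ∀ v, d v ≤ 1) :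
    ∑ v ∈ d.support, 2 ^ (v : ℕ) = ∑ v : Fin n, d v * 2 ^ (v : ℕ) := by
  have h1 : ∑ v ∈ d.support, 2 ^ (v : ℕ) = ∑ v ∈ d.support, d v * 2 ^ (v : ℕ) := by
    refine Finset.sum_congr rfl fun v hv => ?_
    have h2 : d v ≠ 0 := Finsupp.mem_support_iff.mp hv
    have h3 := h v
    have : d v = 1 := by omega
    rw [this, one_mul]
  rw [h1]
  refine Finset.sum_subset (f := fun v => d v * 2 ^ (v : ℕ)) (Finset.subset_univ d.support) ?_
  intro v _ hv
  rw [Finsupp.notMem_support_iff.mp hv, zero_mul]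

lemma deg_eq (n : ℕ) (d : Fin n →₀ ℕ) :
    (d.sum fun _ e => e) = ∑ v : Fin n, d v := by
  rw [Finsupp.sum]
  refine Finset.sum_subset (f := fun v => d v) (Finset.subset_univ d.support) ?_
  intro v _ hv
  simpa using Finsupp.notMem_support_iff.mp hv

/-- Encoding multilinear monomials by characteristic vectors: the product
T₁⋯T_k contains the monomial x₁⋯x_n iff the product of the encoded bivariate
polynomials Q₁⋯Q_k contains the monomial yⁿ x^(2ⁿ−1). -/
theorem multilinear_monomial_iff_encoded (n k : ℕ)
    (T : Fin k → MvPolynomial (Fin n) ℕ)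
    (hml : ∀ i, ∀ d ∈ (T i).support, ∀ v, d v ≤ 1)
    (Q : Fin k → MvPolynomial (Fin 2) ℕ)
    (hQ : ∀ i, Q i =
      ∑ d ∈ (T i).support,
        MvPolynomial.monomial
          (Finsupp.single (0 : Fin 2) (∑ v ∈ d.support, 2 ^ (v : ℕ)) +
            Finsupp.single (1 : Fin 2) (d.sum fun _ e => e))
          ((T i).coeff d)) :
    0 < (∏ i, T i).coeff (∑ v : Fin n, Finsupp.single v 1) ↔
      0 < (∏ i, Q i).coeff
            (Finsupp.single (0 : Fin 2) (2 ^ n - 1) +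
              Finsupp.single (1 : Fin 2) n) := by
  classical
  have hallones : ∀ w : Fin n, (∑ v : Fin n, Finsupp.single v (1:ℕ)) w = 1 := by
    intro w
    rw [Finsupp.finset_sum_apply]
    simp [Finsupp.single_apply]
  have hQpos : ∀ (i : Fin k) (e : Fin 2 →₀ ℕ), 0 < (Q i).coeff e ↔
      ∃ d ∈ (T i).support,
        (Finsupp.single (0 : Fin 2) (∑ v ∈ d.support, 2 ^ (v : ℕ)) +
          Finsupp.single (1 : Fin 2) (d.sum fun _ e => e)) = e := by
    intro i e
    rw [hQ i, MvPolynomial.coeff_sum, Nat.pos_iff_ne_zero, Ne, Finset.sum_eq_zero_iff]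
    push_neg
    constructor
    · rintro ⟨d, hd, hne⟩
      rw [MvPolynomial.coeff_monomial] at hne
      refine ⟨d, hd, ?_⟩
      by_contra hc
      rw [if_neg hc] at hne
      exact hne rfl
    · rintro ⟨d, hd, rfl⟩
      refine ⟨d, hd, ?_⟩
      rw [MvPolynomial.coeff_monomial, if_pos rfl]
      exact MvPolynomial.mem_support_iff.mp hd
  rw [coeff_prod_pos, coeff_prod_pos]
  constructor
  · rintro ⟨f, hf, hfsum⟩
    have hfsupp : ∀ i, f i ∈ (T i).support := fun i =>
      MvPolynomial.mem_support_iff.mpr (Nat.pos_iff_ne_zero.mp (hf i (Finset.mem_univ i)))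
    have hcol : ∀ v : Fin n, (∑ i, (f i) v) = 1 := by
      intro v
      have h := congrArg (fun g : Fin n →₀ ℕ => g v) hfsum
      simpa [Finsupp.finset_sum_apply, hallones] using h
    refine ⟨fun i => Finsupp.single (0 : Fin 2) (∑ v ∈ (f i).support, 2 ^ (v : ℕ)) +
        Finsupp.single (1 : Fin 2) ((f i).sum fun _ e => e),
      fun i _ => (hQpos i _).mpr ⟨f i, hfsupp i, rfl⟩, ?_⟩
    rw [Finset.sum_add_distrib, ← Finsupp.single_finset_sum, ← Finsupp.single_finset_sum]
    have e1 : ∑ i, ∑ v ∈ (f i).support, 2 ^ (v : ℕ) = 2 ^ n - 1 := by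
      calc ∑ i, ∑ v ∈ (f i).support, 2 ^ (v : ℕ)
          = ∑ i, ∑ v : Fin n, (f i) v * 2 ^ (v : ℕ) :=
            Finset.sum_congr rfl fun i _ => supp_pow_eq n (f i) (hml i (f i) (hfsupp i))
        _ = ∑ v : Fin n, ∑ i, (f i) v * 2 ^ (v : ℕ) := Finset.sum_comm
        _ = ∑ v : Fin n, (∑ i, (f i) v) * 2 ^ (v : ℕ) :=
            Finset.sum_congr rfl fun v _ => (Finset.sum_mul _ _ _).symm
        _ = ∑ v : Fin n, 2 ^ (v : ℕ) := by
            refine Finset.sum_congr rfl fun v _ => ?_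
            rw [hcol v, one_mul]
        _ = 2 ^ n - 1 := by
            rw [Fin.sum_univ_eq_sum_range (fun m => 2 ^ m) n]; exact sum_two_pow n
    have e2 : ∑ i, ((f i).sum fun _ e => e) = n := by
      calc ∑ i, ((f i).sum fun _ e => e)
          = ∑ i, ∑ v : Fin n, (f i) v := Finset.sum_congr rfl fun i _ => deg_eq n (f i)
        _ = ∑ v : Fin n, ∑ i, (f i) v := Finset.sum_comm
        _ = ∑ v : Fin n, 1 := Finset.sum_congr rfl fun v _ => hcol v
        _ = n := by simp
    rw [e1, e2]
  · rintro ⟨g, hg, hgsum⟩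
    choose dd hdmem hdphi using fun i => (hQpos i (g i)).mp (hg i (Finset.mem_univ i))
    have hsum2 : ∑ i, (Finsupp.single (0 : Fin 2) (∑ v ∈ (dd i).support, 2 ^ (v : ℕ)) +
        Finsupp.single (1 : Fin 2) ((dd i).sum fun _ e => e)) =
        Finsupp.single (0 : Fin 2) (2 ^ n - 1) + Finsupp.single (1 : Fin 2) (n:ℕ) := by
      rw [← hgsum]
      exact Finset.sum_congr rfl fun i _ => hdphi i
    rw [Finset.sum_add_distrib, ← Finsupp.single_finset_sum, ← Finsupp.single_finset_sum] at hsum2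
    have hA : ∑ i, ∑ v ∈ (dd i).support, 2 ^ (v : ℕ) = 2 ^ n - 1 := by
      have h := congrArg (fun g : Fin 2 →₀ ℕ => g 0) hsum2
      simpa using h
    have hB : ∑ i, ((dd i).sum fun _ e => e) = n := by
      have h := congrArg (fun g : Fin 2 →₀ ℕ => g 1) hsum2
      simpa using h
    have hA' : ∑ v : Fin n, (∑ i, (dd i) v) * 2 ^ (v : ℕ) = 2 ^ n - 1 := by
      calc ∑ v : Fin n, (∑ i, (dd i) v) * 2 ^ (v : ℕ)
          = ∑ v : Fin n, ∑ i, (dd i) v * 2 ^ (v : ℕ) :=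
            Finset.sum_congr rfl fun v _ => Finset.sum_mul _ _ _
        _ = ∑ i, ∑ v : Fin n, (dd i) v * 2 ^ (v : ℕ) := Finset.sum_comm
        _ = ∑ i, ∑ v ∈ (dd i).support, 2 ^ (v : ℕ) :=
            Finset.sum_congr rfl fun i _ => (supp_pow_eq n (dd i) (hml i (dd i) (hdmem i))).symm
        _ = 2 ^ n - 1 := hA
    have hB' : ∑ v : Fin n, (∑ i, (dd i) v) = n := by
      calc ∑ v : Fin n, ∑ i, (dd i) v
          = ∑ i, ∑ v : Fin n, (dd i) v := Finset.sum_comm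
        _ = ∑ i, ((dd i).sum fun _ e => e) :=
            Finset.sum_congr rfl fun i _ => (deg_eq n (dd i)).symm
        _ = n := hB
    set S : ℕ → ℕ := fun m => if h : m < n then ∑ i, (dd i) ⟨m, h⟩ else 0 with hS
    have hSv : ∀ v : Fin n, S (v : ℕ) = ∑ i, (dd i) v := by
      intro v
      rw [hS]
      simp only [dif_pos v.isLt, Fin.eta]
    have h1 : ∑ v ∈ Finset.range n, S v * 2 ^ v = 2 ^ n - 1 := by
      rw [← Fin.sum_univ_eq_sum_range (fun m => S m * 2 ^ m) n]
      rw [Finset.sum_congr rfl fun v _ => by rw [hSv v]]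
      exact hA'
    have h2 : ∑ v ∈ Finset.range n, S v = n := by
      rw [← Fin.sum_univ_eq_sum_range (fun m => S m) n]
      rw [Finset.sum_congr rfl fun v _ => hSv v]
      exact hB'
    have hone := binary_unique n S h1 (le_of_eq h2)
    have hddsum : ∑ i, dd i = ∑ v : Fin n, Finsupp.single v (1:ℕ) := by
      ext v
      rw [Finsupp.finset_sum_apply, hallones]
      exact (hSv v).symm.trans (hone v v.isLt)
    exact ⟨dd, fun i _ => Nat.pos_of_ne_zero (MvPolynomial.mem_support_iff.mp (hdmem i)), hddsum⟩
end

section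
/- Let q ≥ 2, let E ∈ {0,1}^{p×q} and M ∈ ℤ≥0^{p×q} both be row-normalized (i.e., rowcode ≥ 0 for every row). If colweight(M,0) = colweight(E,0), weight(M) = weight(E), rowsum(M) = rowsum(E), and code(M) = code(E), then M = E. -/
lemma digit_ge (b : ℕ) (hb : 2 ≤ b) :
    ∀ (n : ℕ) (a d : ℕ → ℕ), (∀ i, i < n → d i < b) →
      (∑ i ∈ Finset.range n, b ^ i * a i = ∑ i ∈ Finset.range n, b ^ i * d i) →
      ∑ i ∈ Finset.range n, d i ≤ ∑ i ∈ Finset.range n, a i := by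
  intro n
  induction n with
  | zero => intro a d _ _; simp
  | succ n ih =>
    intro a d hd hv
    rw [Finset.sum_range_succ' _ n, Finset.sum_range_succ' _ n] at hv
    rw [Finset.sum_range_succ' _ n, Finset.sum_range_succ' _ n]
    have hA : ∀ f : ℕ → ℕ, (∑ i ∈ Finset.range n, b ^ (i + 1) * f (i + 1))
        = b * ∑ i ∈ Finset.range n, b ^ i * f (i + 1) := by
      intro f; rw [Finset.mul_sum]; apply Finset.sum_congr rfl; intro i _; ring
    rw [hA a, hA d] at hv
    simp only [pow_zero, one_mul] at hv
    set A := ∑ i ∈ Finset.range n, b ^ i * a (i + 1) with hAdef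
    set D := ∑ i ∈ Finset.range n, b ^ i * d (i + 1) with hDdef
    have hd0 : d 0 < b := hd 0 (Nat.succ_pos n)
    have hmod : a 0 % b = d 0 := by
      have h1 : (a 0 + b * A) % b = (d 0 + b * D) % b := by
        rw [show a 0 + b * A = b * A + a 0 by ring, show d 0 + b * D = b * D + d 0 by ring, hv]
      rwa [Nat.add_mul_mod_self_left, Nat.add_mul_mod_self_left, Nat.mod_eq_of_lt hd0] at h1
    have ha0 : a 0 = b * (a 0 / b) + d 0 := by
      conv_lhs => rw [← Nat.div_add_mod (a 0) b]
      rw [hmod]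
    set t := a 0 / b with htdef
    have hAD : A + t = D := by
      have h2 : b * A + (b * t + d 0) = b * D + d 0 := by rw [← ha0]; exact hv
      have h3 : b * (A + t) = b * D := by rw [Nat.mul_add]; linarith
      exact Nat.eq_of_mul_eq_mul_left (by omega) h3
    rcases Nat.eq_zero_or_pos n with hn | hn
    · subst hn
      have hA0 : A = 0 := by simp [hAdef]
      have hD0 : D = 0 := by simp [hDdef]
      have ht0 : t = 0 := by omega
      rw [ht0, Nat.mul_zero] at ha0
      simp only [Finset.range_zero, Finset.sum_empty]
      omega
    · set a' : ℕ → ℕ := fun i => a (i + 1) + (if i = 0 then t else 0) with ha'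
      have hval' : ∑ i ∈ Finset.range n, b ^ i * a' i = A + t := by
        simp only [ha', Nat.mul_add, Finset.sum_add_distrib, mul_ite, mul_zero,
          Finset.sum_ite_eq', Finset.mem_range, hn, if_true, pow_zero, one_mul, hAdef]
      have hsum' : ∑ i ∈ Finset.range n, a' i = (∑ i ∈ Finset.range n, a (i + 1)) + t := by
        simp only [ha', Finset.sum_add_distrib, Finset.sum_ite_eq', Finset.mem_range, hn, if_true]
      have hih := ih a' (fun i => d (i + 1)) (fun i hi => hd (i + 1) (by omega))
        (by rw [hval', hAD])
      beta_reduce at hih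
      rw [hsum'] at hih
      have htb : t ≤ b * t := Nat.le_mul_of_pos_left t (by omega)
      omega

lemma digit_eq (b : ℕ) (hb : 2 ≤ b) :
    ∀ (n : ℕ) (a d : ℕ → ℕ), (∀ i, i < n → d i < b) →
      (∑ i ∈ Finset.range n, b ^ i * a i = ∑ i ∈ Finset.range n, b ^ i * d i) →
      (∑ i ∈ Finset.range n, a i ≤ ∑ i ∈ Finset.range n, d i) →
      ∀ i, i < n → a i = d i := by
  intro n
  induction n with
  | zero => intro a d _ _ _ i hi; omega
  | succ n ih =>
    intro a d hd hv hs
    rw [Finset.sum_range_succ' _ n, Finset.sum_range_succ' _ n] at hv hs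
    have hA : ∀ f : ℕ → ℕ, (∑ i ∈ Finset.range n, b ^ (i + 1) * f (i + 1))
        = b * ∑ i ∈ Finset.range n, b ^ i * f (i + 1) := by
      intro f; rw [Finset.mul_sum]; apply Finset.sum_congr rfl; intro i _; ring
    rw [hA a, hA d] at hv
    simp only [pow_zero, one_mul] at hv
    set A := ∑ i ∈ Finset.range n, b ^ i * a (i + 1) with hAdef
    set D := ∑ i ∈ Finset.range n, b ^ i * d (i + 1) with hDdef
    have hd0 : d 0 < b := hd 0 (Nat.succ_pos n)
    have hmod : a 0 % b = d 0 := by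
      have h1 : (a 0 + b * A) % b = (d 0 + b * D) % b := by
        rw [show a 0 + b * A = b * A + a 0 by ring, show d 0 + b * D = b * D + d 0 by ring, hv]
      rwa [Nat.add_mul_mod_self_left, Nat.add_mul_mod_self_left, Nat.mod_eq_of_lt hd0] at h1
    have ha0 : a 0 = b * (a 0 / b) + d 0 := by
      conv_lhs => rw [← Nat.div_add_mod (a 0) b]
      rw [hmod]
    set t := a 0 / b with htdef
    have hAD : A + t = D := by
      have h2 : b * A + (b * t + d 0) = b * D + d 0 := by rw [← ha0]; exact hv
      have h3 : b * (A + t) = b * D := by rw [Nat.mul_add]; linarith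
      exact Nat.eq_of_mul_eq_mul_left (by omega) h3
    rcases Nat.eq_zero_or_pos n with hn | hn
    · subst hn
      have hA0 : A = 0 := by simp [hAdef]
      have hD0 : D = 0 := by simp [hDdef]
      have ht0 : t = 0 := by omega
      rw [ht0, Nat.mul_zero] at ha0
      intro i hi
      interval_cases i
      omega
    · set a' : ℕ → ℕ := fun i => a (i + 1) + (if i = 0 then t else 0) with ha'
      have hval' : ∑ i ∈ Finset.range n, b ^ i * a' i = A + t := by
        simp only [ha', Nat.mul_add, Finset.sum_add_distrib, mul_ite, mul_zero,
          Finset.sum_ite_eq', Finset.mem_range, hn, if_true, pow_zero, one_mul, hAdef]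
      have hsum' : ∑ i ∈ Finset.range n, a' i = (∑ i ∈ Finset.range n, a (i + 1)) + t := by
        simp only [ha', Finset.sum_add_distrib, Finset.sum_ite_eq', Finset.mem_range, hn, if_true]
      have htb : t ≤ b * t := Nat.le_mul_of_pos_left t (by omega)
      have hle' : ∑ i ∈ Finset.range n, a' i ≤ ∑ i ∈ Finset.range n, d (i + 1) := by
        rw [hsum']; omega
      have heq := ih a' (fun i => d (i + 1)) (fun i hi => hd (i + 1) (by omega))
        (by rw [hval', hAD]) hle'
      beta_reduce at heq
      have hsumeq : ∑ i ∈ Finset.range n, a' i = ∑ i ∈ Finset.range n, d (i + 1) :=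
        Finset.sum_congr rfl (fun i hi => heq i (Finset.mem_range.mp hi))
      have ht0 : t = 0 := by
        have htb2 : 2 * t ≤ b * t := Nat.mul_le_mul_right t hb
        omega
      intro i hi
      rcases i with _ | j
      · omega
      · have hj := heq j (by omega)
        simp only [ha', ht0, ite_self, add_zero] at hj
        omega

lemma sum_ext_mul {n : ℕ} (f : Fin n → ℕ) (g : ℕ → ℕ) :
    (∑ j ∈ Finset.range n, g j * (if h : j < n then f ⟨j, h⟩ else 0))
      = ∑ j : Fin n, g (j : ℕ) * f j := by
  rw [← Fin.sum_univ_eq_sum_range (fun j => g j * (if h : j < n then f ⟨j, h⟩ else 0)) n]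
  apply Finset.sum_congr rfl
  intro j _
  rw [dif_pos j.isLt]

lemma sum_ext_plain {n : ℕ} (f : Fin n → ℕ) :
    (∑ j ∈ Finset.range n, (if h : j < n then f ⟨j, h⟩ else 0)) = ∑ j : Fin n, f j := by
  rw [← Fin.sum_univ_eq_sum_range (fun j => (if h : j < n then f ⟨j, h⟩ else 0)) n]
  apply Finset.sum_congr rfl
  intro j _
  rw [dif_pos j.isLt]




/-- Lemma (coding): if E is a row-normalized 0/1 matrix and M a row-normalized
nonnegative-integer matrix (q ≥ 2) with equal colweight of column 0, equal weight,
equal rowsum and equal code, then M = E. -/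
theorem coding_lemma (p q : ℕ) (hq : 2 ≤ q)
    (E M : Fin p → Fin q → ℕ)
    (h01 : ∀ i j, E i j ≤ 1)
    (hnormE : ∀ i : Fin p,
      0 ≤ (∑ j : Fin q, 2 ^ (j : ℕ) * (E i j : ℤ)) - 2 * (E i ⟨0, by omega⟩ : ℤ))
    (hnormM : ∀ i : Fin p,
      0 ≤ (∑ j : Fin q, 2 ^ (j : ℕ) * (M i j : ℤ)) - 2 * (M i ⟨0, by omega⟩ : ℤ))
    (hcol : ∑ i : Fin p, M i ⟨0, by omega⟩ = ∑ i : Fin p, E i ⟨0, by omega⟩)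
    (hweight : ∑ i : Fin p, ∑ j : Fin q, M i j = ∑ i : Fin p, ∑ j : Fin q, E i j)
    (hrowsum :
      (∑ i : Fin p, ((∑ j : Fin q, 2 ^ (j : ℕ) * (M i j : ℤ)) -
          2 * (M i ⟨0, by omega⟩ : ℤ))) =
      ∑ i : Fin p, ((∑ j : Fin q, 2 ^ (j : ℕ) * (E i j : ℤ)) -
          2 * (E i ⟨0, by omega⟩ : ℤ)))
    (hcode :
      (∑ i : Fin p, (2 ^ q - 1 : ℤ) ^ (i : ℕ) *
          ((∑ j : Fin q, 2 ^ (j : ℕ) * (M i j : ℤ)) - 2 * (M i ⟨0, by omega⟩ : ℤ))) =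
      ∑ i : Fin p, (2 ^ q - 1 : ℤ) ^ (i : ℕ) *
          ((∑ j : Fin q, 2 ^ (j : ℕ) * (E i j : ℤ)) - 2 * (E i ⟨0, by omega⟩ : ℤ))) :
    M = E := by
  obtain ⟨q', rfl⟩ : ∃ q', q = q' + 1 := ⟨q - 1, by omega⟩
  have hq' : 1 ≤ q' := by omega
  simp only [Fin.mk_zero] at hnormE hnormM hcol hrowsum hcode
  -- splitting lemma
  have hsplit : ∀ (N : Fin p → Fin (q' + 1) → ℕ) (i : Fin p),
      (∑ j : Fin (q' + 1), 2 ^ (j : ℕ) * (N i j : ℤ))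
        = (N i 0 : ℤ) + 2 * ∑ j : Fin q', 2 ^ (j : ℕ) * (N i j.succ : ℤ) := by
    intro N i
    rw [Fin.sum_univ_succ, Finset.mul_sum]
    simp only [Fin.val_zero, pow_zero, one_mul, Fin.val_succ]
    congr 1
    apply Finset.sum_congr rfl
    intro j _
    ring
  -- natural-number rowcodes
  set rM : Fin p → ℕ := fun i =>
    ((∑ j : Fin (q' + 1), 2 ^ (j : ℕ) * (M i j : ℤ)) - 2 * (M i 0 : ℤ)).toNat with hrMdef
  set rE : Fin p → ℕ := fun i =>
    ((∑ j : Fin (q' + 1), 2 ^ (j : ℕ) * (E i j : ℤ)) - 2 * (E i 0 : ℤ)).toNat with hrEdef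
  have hrMspec : ∀ i, (rM i : ℤ)
      = (∑ j : Fin (q' + 1), 2 ^ (j : ℕ) * (M i j : ℤ)) - 2 * (M i 0 : ℤ) :=
    fun i => Int.toNat_of_nonneg (hnormM i)
  have hrEspec : ∀ i, (rE i : ℤ)
      = (∑ j : Fin (q' + 1), 2 ^ (j : ℕ) * (E i j : ℤ)) - 2 * (E i 0 : ℤ) :=
    fun i => Int.toNat_of_nonneg (hnormE i)
  -- the base
  set B : ℕ := 2 ^ (q' + 1) - 1 with hBdef
  have hpow4 : 4 ≤ 2 ^ (q' + 1) := by
    calc (4 : ℕ) = 2 ^ 2 := by norm_num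
    _ ≤ 2 ^ (q' + 1) := Nat.pow_le_pow_right (by norm_num) (by omega)
  have hB2 : 2 ≤ B := by omega
  have hBcast : ((B : ℕ) : ℤ) = 2 ^ (q' + 1) - 1 := by
    rw [hBdef]
    have h1 : (1 : ℕ) ≤ 2 ^ (q' + 1) := by omega
    push_cast [h1]
    ring
  -- bound on rE
  have hgeo : (∑ j ∈ Finset.range q', (2 : ℤ) ^ j) = 2 ^ q' - 1 := by
    have := geom_sum_mul (2 : ℤ) q'
    linarith
  have hSE : ∀ i, (∑ j : Fin q', 2 ^ (j : ℕ) * (E i j.succ : ℤ)) ≤ 2 ^ q' - 1 := by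
    intro i
    calc (∑ j : Fin q', 2 ^ (j : ℕ) * (E i j.succ : ℤ))
        ≤ ∑ j : Fin q', 2 ^ (j : ℕ) * 1 := by
          apply Finset.sum_le_sum
          intro j _
          have h1 : (E i j.succ : ℤ) ≤ 1 := by exact_mod_cast h01 i j.succ
          have h2 : (0 : ℤ) < 2 ^ (j : ℕ) := by positivity
          nlinarith
      _ = 2 ^ q' - 1 := by
          simp only [mul_one]
          rw [Fin.sum_univ_eq_sum_range (fun j => (2 : ℤ) ^ j) q']
          exact hgeo
  have hrEbound : ∀ i, rE i < B := by
    intro i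
    have h1 : (rE i : ℤ) < (B : ℤ) := by
      rw [hrEspec i, hsplit E i, hBcast]
      have h2 := hSE i
      have h3 : (0 : ℤ) ≤ (E i 0 : ℤ) := by positivity
      have : (2 : ℤ) ^ (q' + 1) = 2 * 2 ^ q' := by ring
      linarith
    exact_mod_cast h1
  -- Step 1: rowcodes are equal, via digit_eq in base B
  have hrowsumN : ∑ i : Fin p, rM i = ∑ i : Fin p, rE i := by
    have hz : ((∑ i : Fin p, rM i : ℕ) : ℤ) = ((∑ i : Fin p, rE i : ℕ) : ℤ) := by
      push_cast
      simp only [hrMspec, hrEspec]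
      exact hrowsum
    exact_mod_cast hz
  have hcodeN : ∑ i : Fin p, B ^ (i : ℕ) * rM i = ∑ i : Fin p, B ^ (i : ℕ) * rE i := by
    have hz : ((∑ i : Fin p, B ^ (i : ℕ) * rM i : ℕ) : ℤ)
        = ((∑ i : Fin p, B ^ (i : ℕ) * rE i : ℕ) : ℤ) := by
      push_cast [hBcast]
      simp only [hrMspec, hrEspec]
      exact hcode
    exact_mod_cast hz
  -- package as ℕ → ℕ functions
  set cM : ℕ → ℕ := fun i => if h : i < p then rM ⟨i, h⟩ else 0 with hcMdef
  set cE : ℕ → ℕ := fun i => if h : i < p then rE ⟨i, h⟩ else 0 with hcEdef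
  have hrcode : ∀ i : Fin p, rM i = rE i := by
    have h1 : ∑ i ∈ Finset.range p, B ^ i * cM i = ∑ i ∈ Finset.range p, B ^ i * cE i := by
      rw [hcMdef, hcEdef, sum_ext_mul rM (fun i => B ^ i), sum_ext_mul rE (fun i => B ^ i)]
      exact hcodeN
    have h2 : ∑ i ∈ Finset.range p, cM i ≤ ∑ i ∈ Finset.range p, cE i := by
      rw [hcMdef, hcEdef, sum_ext_plain rM, sum_ext_plain rE, hrowsumN]
    have h3 : ∀ i, i < p → cE i < B := by
      intro i hi
      rw [hcEdef]
      simp only [hi, dif_pos]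
      exact hrEbound _
    have h4 := digit_eq B hB2 p cM cE h3 h1 h2
    intro i
    have h5 := h4 (i : ℕ) i.isLt
    rw [hcMdef, hcEdef] at h5
    simpa [i.isLt] using h5
  -- Step 2: parity argument, column 0 equal
  have hM0 : ∀ i : Fin p, E i 0 ≤ M i 0 := by
    intro i
    have h1 := hrMspec i
    have h2 := hrEspec i
    rw [hsplit M i] at h1
    rw [hsplit E i] at h2
    have h3 := hrcode i
    have h4 : E i 0 ≤ 1 := h01 i 0
    omega
  have hcol0 : ∀ i : Fin p, E i 0 = M i 0 :=
    fun i => (Finset.sum_eq_sum_iff_of_le (fun i _ => hM0 i)).mp hcol.symm i (Finset.mem_univ i)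
  -- Step 3: per-row binary values equal
  have hrowval : ∀ i : Fin p,
      (∑ j : Fin (q' + 1), 2 ^ (j : ℕ) * M i j) = ∑ j : Fin (q' + 1), 2 ^ (j : ℕ) * E i j := by
    intro i
    have hz : (∑ j : Fin (q' + 1), 2 ^ (j : ℕ) * (M i j : ℤ))
        = ∑ j : Fin (q' + 1), 2 ^ (j : ℕ) * (E i j : ℤ) := by
      have h1 := hrMspec i
      have h2 := hrEspec i
      have h3 := hrcode i
      have h4 := hcol0 i
      omega
    have hz2 : ((∑ j : Fin (q' + 1), 2 ^ (j : ℕ) * M i j : ℕ) : ℤ)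
        = ((∑ j : Fin (q' + 1), 2 ^ (j : ℕ) * E i j : ℕ) : ℤ) := by
      push_cast
      exact hz
    exact_mod_cast hz2
  -- per row, weight of M row ≥ weight of E row
  have hrowge : ∀ i : Fin p, (∑ j : Fin (q' + 1), E i j) ≤ ∑ j : Fin (q' + 1), M i j := by
    intro i
    have h1 : ∑ j ∈ Finset.range (q' + 1),
        2 ^ j * (if h : j < q' + 1 then M i ⟨j, h⟩ else 0)
        = ∑ j ∈ Finset.range (q' + 1), 2 ^ j * (if h : j < q' + 1 then E i ⟨j, h⟩ else 0) := by
      rw [sum_ext_mul (M i) (fun j => 2 ^ j), sum_ext_mul (E i) (fun j => 2 ^ j)]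
      exact hrowval i
    have h3 : ∀ j, j < q' + 1 → (if h : j < q' + 1 then E i ⟨j, h⟩ else 0) < 2 := by
      intro j hj
      simp only [hj, dif_pos]
      have := h01 i ⟨j, hj⟩
      omega
    have h4 := digit_ge 2 le_rfl (q' + 1) _ _ h3 h1
    rwa [sum_ext_plain (M i), sum_ext_plain (E i)] at h4
  have hroweq : ∀ i : Fin p, (∑ j : Fin (q' + 1), E i j) = ∑ j : Fin (q' + 1), M i j :=
    fun i => (Finset.sum_eq_sum_iff_of_le (fun i _ => hrowge i)).mp hweight.symm i
      (Finset.mem_univ i)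
  -- conclude entrywise
  funext i j
  have h1 : ∑ j ∈ Finset.range (q' + 1),
      2 ^ j * (if h : j < q' + 1 then M i ⟨j, h⟩ else 0)
      = ∑ j ∈ Finset.range (q' + 1), 2 ^ j * (if h : j < q' + 1 then E i ⟨j, h⟩ else 0) := by
    rw [sum_ext_mul (M i) (fun j => 2 ^ j), sum_ext_mul (E i) (fun j => 2 ^ j)]
    exact hrowval i
  have h2 : ∑ j ∈ Finset.range (q' + 1), (if h : j < q' + 1 then M i ⟨j, h⟩ else 0)
      ≤ ∑ j ∈ Finset.range (q' + 1), (if h : j < q' + 1 then E i ⟨j, h⟩ else 0) := by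
    rw [sum_ext_plain (M i), sum_ext_plain (E i), hroweq i]
  have h3 : ∀ j, j < q' + 1 → (if h : j < q' + 1 then E i ⟨j, h⟩ else 0) < 2 := by
    intro j hj
    simp only [hj, dif_pos]
    have := h01 i ⟨j, hj⟩
    omega
  have h4 := digit_eq 2 le_rfl (q' + 1) _ _ h3 h1 h2
  have h5 := h4 (j : ℕ) j.isLt
  simpa [j.isLt] using h5
end

section
/- Let b > 1 and suppose X = Σ_i x_i b^i with x_i ∈ ℤ≥0 finitely supported and Σ_i x_i equal to the base-b digit sum of X. Then x_i < b for all i, i.e., (x_i) is the standard base-b representation of X. -/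
private lemma digitSum_add_le {b : ℕ} (hb : 1 < b) :
    ∀ k m n : ℕ, m + n = k →
      (Nat.digits b (m + n)).sum ≤ (Nat.digits b m).sum + (Nat.digits b n).sum := by
  intro k
  induction k using Nat.strong_induction_on with
  | _ k ih =>
    intro m n hk
    rcases Nat.eq_zero_or_pos m with rfl | hm
    · simp
    rcases Nat.eq_zero_or_pos n with rfl | hn
    · simp
    have hb0 : 0 < b := by omega
    set c : ℕ := (m % b + n % b) / b with hc
    have hmodlt : m % b < b := Nat.mod_lt _ hb0
    have hnodlt : n % b < b := Nat.mod_lt _ hb0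
    have hc1 : c ≤ 1 := by
      rw [hc]
      exact Nat.lt_succ_iff.mp (Nat.div_lt_of_lt_mul (by omega))
    -- (m+n)/b = m/b + n/b + c
    have hdiv : (m + n) / b = m / b + n / b + c := by
      rw [Nat.add_div hb0, hc]
      congr 1
      split
      · exact (Nat.div_eq_of_lt_le (by simpa using ‹b ≤ m % b + n % b›) (by omega)).symm
      · exact (Nat.div_eq_of_lt (by omega)).symm
    have hmod : b * c + (m + n) % b = m % b + n % b := by
      rw [Nat.add_mod, hc]
      exact Nat.div_add_mod _ _
    have hm' : m / b < m := Nat.div_lt_self hm hb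
    have hn' : n / b ≤ n := Nat.div_le_self n b
    have hnc : n / b + c ≤ n := by
      rcases Nat.lt_or_ge n 2 with h2 | h2
      · interval_cases n
        · have : 1 / b = 0 := Nat.div_eq_of_lt hb
          omega
      · have : n / b ≤ n / 2 := Nat.div_le_div_left (by omega) (by omega)
        have : n / 2 + 1 ≤ n := by omega
        omega
    have ih1 := ih (m / b + (n / b + c)) (by omega) (m / b) (n / b + c) rfl
    rw [← add_assoc] at ih1
    have ih2 := ih (n / b + c) (by omega) (n / b) c rfl
    have hcs : (Nat.digits b c).sum ≤ c := Nat.digit_sum_le b c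
    have e0 : (Nat.digits b (m + n)).sum = (m + n) % b + (Nat.digits b ((m + n) / b)).sum := by
      rw [Nat.digits_def' hb (by omega)]; simp
    have e1 : (Nat.digits b m).sum = m % b + (Nat.digits b (m / b)).sum := by
      rw [Nat.digits_def' hb hm]; simp
    have e2 : (Nat.digits b n).sum = n % b + (Nat.digits b (n / b)).sum := by
      rw [Nat.digits_def' hb hn]; simp
    rw [hdiv] at e0
    clear hc
    interval_cases c <;> omega

private lemma digitSum_mul_pow {b : ℕ} (hb : 1 < b) (c i : ℕ) :
    (Nat.digits b (c * b ^ i)).sum = (Nat.digits b c).sum := by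
  rcases Nat.eq_zero_or_pos c with rfl | hc
  · simp
  · rw [mul_comm, Nat.digits_base_pow_mul hb hc]
    simp

private lemma finsupp_sum_single_add {a n : ℕ} {f : ℕ →₀ ℕ} (ha : a ∉ f.support)
    (hn : n ≠ 0) (g : ℕ → ℕ → ℕ) (hg : ∀ i, g i 0 = 0) :
    (Finsupp.single a n + f).sum g = g a n + f.sum g := by
  rw [Finsupp.sum, Finsupp.support_single_add ha hn, Finset.sum_cons]
  have hfa : f a = 0 := Finsupp.notMem_support_iff.mp ha
  congr 1
  · simp [Finsupp.add_apply, hfa]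
  · rw [Finsupp.sum]
    refine Finset.sum_congr rfl fun i hi => ?_
    have hia : a ≠ i := fun h => ha (h ▸ hi)
    simp [Finsupp.add_apply, Finsupp.single_apply, hia]

private lemma digitSum_le_sum {b : ℕ} (hb : 1 < b) (x : ℕ →₀ ℕ) :
    (Nat.digits b (x.sum fun i c => c * b ^ i)).sum ≤ x.sum fun _ c => (Nat.digits b c).sum := by
  induction x using Finsupp.induction with
  | zero => simp
  | single_add a n f ha hn ihf =>
    rw [finsupp_sum_single_add ha hn _ (fun i => by simp),
        finsupp_sum_single_add ha hn _ (fun i => by simp)]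
    calc (Nat.digits b (n * b ^ a + f.sum fun i c => c * b ^ i)).sum
        ≤ (Nat.digits b (n * b ^ a)).sum + (Nat.digits b (f.sum fun i c => c * b ^ i)).sum :=
          digitSum_add_le hb _ _ _ rfl
      _ ≤ (Nat.digits b n).sum + (f.sum fun _ c => (Nat.digits b c).sum) := by
          rw [digitSum_mul_pow hb]; exact Nat.add_le_add_left ihf _
      _ = _ := rfl

private lemma digitSum_deficit {b : ℕ} (hb : 1 < b) {c : ℕ} (hc : b ≤ c) :
    (Nat.digits b c).sum + (b - 1) ≤ c := by
  have hc0 : 0 < c := by omega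
  have e : (Nat.digits b c).sum = c % b + (Nat.digits b (c / b)).sum := by
    rw [Nat.digits_def' hb hc0]; simp
  have h1 : (Nat.digits b (c / b)).sum ≤ c / b := Nat.digit_sum_le b (c / b)
  have hq : 1 ≤ c / b := (Nat.one_le_div_iff (by omega)).mpr hc
  obtain ⟨q', hq'⟩ : ∃ q', c / b = q' + 1 := ⟨c / b - 1, by omega⟩
  have h3 : q' ≤ b * q' := Nat.le_mul_of_pos_left q' (by omega)
  have h4 : b * (c / b) = b * q' + b := by rw [hq']; ring
  have := Nat.div_add_mod c b
  omega

/-- Uniqueness: any finitely supported nonnegative expansion of X in base b whose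
digit sum equals the standard base-b digit sum has all digits < b. -/
theorem expansion_of_min_digit_sum_is_standard (b : ℕ) (hb : 1 < b)
    (x : ℕ →₀ ℕ) (X : ℕ) (hX : (x.sum fun i c => c * b ^ i) = X)
    (hmin : (x.sum fun _ c => c) = (Nat.digits b X).sum) :
    ∀ i, x i < b := by
  subst hX
  intro i0
  by_contra hcon
  push_neg at hcon
  have hi0 : i0 ∈ x.support := Finsupp.mem_support_iff.mpr (by omega)
  have key : (x.sum fun _ c => (Nat.digits b c).sum) + (b - 1) ≤ x.sum fun _ c => c := by
    rw [Finsupp.sum, Finsupp.sum,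
        ← Finset.add_sum_erase _ (fun i => (Nat.digits b (x i)).sum) hi0,
        ← Finset.add_sum_erase _ (fun i => x i) hi0]
    have h1 : (Nat.digits b (x i0)).sum + (b - 1) ≤ x i0 := digitSum_deficit hb hcon
    have h2 : ∑ i ∈ x.support.erase i0, (Nat.digits b (x i)).sum
        ≤ ∑ i ∈ x.support.erase i0, x i :=
      Finset.sum_le_sum fun i _ => Nat.digit_sum_le b (x i)
    omega
  have main := digitSum_le_sum hb x
  omega
end

section
/- Let b > 1 and x : ℕ → ℤ≥0 be finitely supported with some x_j ≥ b. Then the digit sum Σ_i x_i is strictly greater than the base-b digit sum of X = Σ_i x_i b^i. -/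
private lemma sum_digits_step (b : ℕ) (hb : 1 < b) (n : ℕ) :
    (Nat.digits b n).sum = n % b + (Nat.digits b (n / b)).sum := by
  rcases Nat.eq_zero_or_pos n with rfl | hn
  · simp
  · rw [Nat.digits_def' hb hn, List.sum_cons]

private lemma sum_digits_add_le_aux (b : ℕ) (hb : 1 < b) :
    ∀ k m n, m + n ≤ k →
      (Nat.digits b (m + n)).sum ≤ (Nat.digits b m).sum + (Nat.digits b n).sum := by
  intro k
  induction k with
  | zero =>
    intro m n h
    obtain ⟨rfl, rfl⟩ : m = 0 ∧ n = 0 := by omega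
    simp
  | succ k ih =>
    intro m n h
    rcases Nat.eq_zero_or_pos (m + n) with h0 | hpos
    · obtain ⟨rfl, rfl⟩ : m = 0 ∧ n = 0 := by omega
      simp
    have hb0 : 0 < b := by omega
    have hm := Nat.div_add_mod m b
    have hn := Nat.div_add_mod n b
    have hr1 : m % b < b := Nat.mod_lt _ hb0
    have hr2 : n % b < b := Nat.mod_lt _ hb0
    rw [sum_digits_step b hb (m + n), sum_digits_step b hb m, sum_digits_step b hb n]
    have hdiv : (m + n) / b = m / b + n / b + (m % b + n % b) / b := by
      conv_lhs => rw [← hm, ← hn]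
      rw [show b * (m / b) + m % b + (b * (n / b) + n % b)
            = b * (m / b + n / b) + (m % b + n % b) by ring]
      rw [Nat.mul_add_div hb0]
    have hmod : (m + n) % b = (m % b + n % b) % b := Nat.add_mod m n b
    by_cases hc : m % b + n % b < b
    · have h1 : (m % b + n % b) / b = 0 := Nat.div_eq_of_lt hc
      have h2 : (m + n) % b = m % b + n % b := by rw [hmod, Nat.mod_eq_of_lt hc]
      rw [h2, hdiv, h1, add_zero]
      have hlt : m / b + n / b ≤ k := by
        have : m / b ≤ m / 2 := Nat.div_le_div_left hb two_pos
        have : n / b ≤ n / 2 := Nat.div_le_div_left hb two_pos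
        have : m / b ≤ m := Nat.div_le_self _ _
        have : n / b ≤ n := Nat.div_le_self _ _
        have h3 : m / b + n / b < m + n := by
          rcases Nat.eq_zero_or_pos m with rfl | hm0
          · simpa using Nat.div_lt_self (by omega) hb
          · have := Nat.div_lt_self hm0 hb
            have := Nat.div_le_self n b
            omega
        omega
      have := ih (m / b) (n / b) hlt
      omega
    · push_neg at hc
      have h1 : (m % b + n % b) / b = 1 :=
        Nat.div_eq_of_lt_le (by omega : 1 * b ≤ m % b + n % b) (by omega : m % b + n % b < (1 + 1) * b)
      rw [hdiv, h1]
      have hS1 : (Nat.digits b 1).sum = 1 := by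
        rw [Nat.digits_def' hb one_pos]
        simp [Nat.mod_eq_of_lt hb, Nat.div_eq_of_lt hb]
      have hmn : b ≤ m + n := by omega
      have hlt1 : m / b + n / b + 1 ≤ k := by
        have h3 : (m + n) / b < m + n := Nat.div_lt_self hpos hb
        have h4 : m / b + n / b + 1 = (m + n) / b := by rw [hdiv, h1]
        have h5 : (m + n) / b ≤ (m + n) / 2 := Nat.div_le_div_left hb two_pos
        have h6 : (m + n) / 2 < m + n := Nat.div_lt_self hpos one_lt_two
        omega
      have i1 := ih (m / b + n / b) 1 hlt1
      have i2 := ih (m / b) (n / b) (by omega)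
      rw [hS1] at i1
      have hmodmn : (m + n) % b = m % b + n % b - b := by
        rw [hmod, Nat.mod_eq_sub_mod hc, Nat.mod_eq_of_lt (by omega)]
      omega

private lemma sum_digits_add_le (b : ℕ) (hb : 1 < b) (m n : ℕ) :
    (Nat.digits b (m + n)).sum ≤ (Nat.digits b m).sum + (Nat.digits b n).sum :=
  sum_digits_add_le_aux b hb (m + n) m n le_rfl

private lemma sum_digits_mul_pow (b : ℕ) (hb : 1 < b) (c k : ℕ) :
    (Nat.digits b (c * b ^ k)).sum = (Nat.digits b c).sum := by
  rcases Nat.eq_zero_or_pos c with rfl | hc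
  · simp
  · rw [mul_comm, Nat.digits_base_pow_mul hb hc]
    simp

private lemma sum_digits_lt_self (b : ℕ) (hb : 1 < b) (n : ℕ) (hn : b ≤ n) :
    (Nat.digits b n).sum < n := by
  rw [sum_digits_step b hb n]
  have h1 : (Nat.digits b (n / b)).sum ≤ n / b := Nat.digit_sum_le _ _
  have h2 : 1 ≤ n / b := (Nat.one_le_div_iff (by omega)).2 hn
  have h3 := Nat.div_add_mod n b
  have : n / b < b * (n / b) := by nlinarith
  omega

private lemma sum_digits_finsupp_le (b : ℕ) (hb : 1 < b) (x : ℕ →₀ ℕ) :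
    (Nat.digits b (x.sum fun i c => c * b ^ i)).sum ≤ x.sum fun _ c => c := by
  induction x using Finsupp.induction with
  | zero => simp
  | single_add a n f ha hn ih =>
    rw [Finsupp.sum_add_index (by simp) (by intros; ring),
        Finsupp.sum_add_index (by simp) (by intros; ring)]
    simp only [Finsupp.sum_single_index, zero_mul]
    calc (Nat.digits b (n * b ^ a + f.sum fun i c => c * b ^ i)).sum
        ≤ (Nat.digits b (n * b ^ a)).sum + (Nat.digits b (f.sum fun i c => c * b ^ i)).sum :=
          sum_digits_add_le b hb _ _
      _ ≤ n + (f.sum fun _ c => c) := by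
          rw [sum_digits_mul_pow b hb]
          exact Nat.add_le_add (Nat.digit_sum_le _ _) ih

/-- If some digit of a finitely supported expansion is ≥ b, then the digit sum of
the expansion strictly exceeds the base-b digit sum of the represented number. -/
theorem digit_sum_strict_gt_of_nonstandard (b : ℕ) (hb : 1 < b)
    (x : ℕ →₀ ℕ) (j : ℕ) (hj : b ≤ x j) :
    (Nat.digits b (x.sum fun i c => c * b ^ i)).sum < x.sum fun _ c => c := by
  have hx : Finsupp.single j (x j) + x.erase j = x := Finsupp.single_add_erase j x
  rw [← hx, Finsupp.sum_add_index (by simp) (by intros; ring),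
      Finsupp.sum_add_index (by simp) (by intros; ring)]
  simp only [Finsupp.sum_single_index, zero_mul]
  calc (Nat.digits b (x j * b ^ j + (x.erase j).sum fun i c => c * b ^ i)).sum
      ≤ (Nat.digits b (x j * b ^ j)).sum
          + (Nat.digits b ((x.erase j).sum fun i c => c * b ^ i)).sum :=
        sum_digits_add_le b hb _ _
    _ < x j + ((x.erase j).sum fun _ c => c) := by
        rw [sum_digits_mul_pow b hb]
        exact Nat.add_lt_add_of_lt_of_le (sum_digits_lt_self b hb _ hj)
          (sum_digits_finsupp_le b hb _)
end
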